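/- Suppose the targets t_1, ..., t_n ∈ ℝ^d are pairwise distinct and the weights w_1, ..., w_n are all nonzero. Then at every pure Nash equilibrium (x_1,...,x_n) of the Battling Influencers Game, at most one player's action lies in the topological interior of 𝒳; that is, |{ i ∈ {1,...,n} : x_i ∈ int 𝒳 }| ≤ 1. -/

import Mathlib

open scoped RealInnerProductSpace

noncomputable section

/-- Player `i`'s loss in the Battling Influencers Game:
`ℓ_i(x) = ‖w_0 x_0 + ∑_{j=1}^n w_j x_j − t_i‖₂²`. -/
def loss {d n : ℕ} (w0 : ℝ) (x0 : EuclideanSpace ℝ (Fin d)) (w : Fin n → ℝ)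
    (t : Fin n → EuclideanSpace ℝ (Fin d)) (i : Fin n)
    (x : Fin n → EuclideanSpace ℝ (Fin d)) : ℝ :=
  ‖w0 • x0 + (∑ j, w j • x j) - t i‖ ^ 2

/-- A pure Nash equilibrium of the Battling Influencers Game with common action
set `X`: every player plays in `X` and no player can strictly decrease its own
loss by a unilateral deviation inside `X`. -/
def IsPureNE {d n : ℕ} (X : Set (EuclideanSpace ℝ (Fin d))) (w0 : ℝ)
    (x0 : EuclideanSpace ℝ (Fin d)) (w : Fin n → ℝ)
    (t : Fin n → EuclideanSpace ℝ (Fin d))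
    (x : Fin n → EuclideanSpace ℝ (Fin d)) : Prop :=
  (∀ i, x i ∈ X) ∧
    ∀ i, ∀ y ∈ X, loss w0 x0 w t i x ≤ loss w0 x0 w t i (Function.update x i y)

lemma sum_update_smul {d n : ℕ} (w : Fin n → ℝ) (x : Fin n → EuclideanSpace ℝ (Fin d))
    (i : Fin n) (y : EuclideanSpace ℝ (Fin d)) :
    (∑ j, w j • Function.update x i y j) = (∑ j, w j • x j) - w i • x i + w i • y := by
  have h : (fun j => w j • Function.update x i y j)
      = Function.update (fun j => w j • x j) i (w i • y) := by
    funext j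
    by_cases hji : j = i
    · subst hji; simp
    · simp [Function.update_of_ne hji]
  rw [h, Finset.sum_update_of_mem (Finset.mem_univ i),
    Finset.sum_sdiff_eq_sub (Finset.subset_univ {i}), Finset.sum_singleton]
  abel

lemma key_interior {d n : ℕ} (X : Set (EuclideanSpace ℝ (Fin d))) (w0 : ℝ)
    (x0 : EuclideanSpace ℝ (Fin d)) (w : Fin n → ℝ)
    (t : Fin n → EuclideanSpace ℝ (Fin d)) (x : Fin n → EuclideanSpace ℝ (Fin d))
    (hNE : IsPureNE X w0 x0 w t x) (i : Fin n) (hwi : w i ≠ 0)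
    (hi : x i ∈ interior X) : w0 • x0 + (∑ j, w j • x j) = t i := by
  by_contra hne
  set u : EuclideanSpace ℝ (Fin d) := w0 • x0 + (∑ j, w j • x j) - t i with hu
  have hu0 : u ≠ 0 := sub_ne_zero.mpr hne
  have hun : 0 < ‖u‖ := norm_pos_iff.mpr hu0
  obtain ⟨r, hr, hball⟩ := Metric.isOpen_iff.mp isOpen_interior (x i) hi
  have hwpos : 0 < |w i| := abs_pos.mpr hwi
  set c : ℝ := min (1/2) (r * |w i| / (2 * ‖u‖)) with hc
  have hc0 : 0 < c := lt_min (by norm_num) (by positivity)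
  have hc1 : c ≤ 1/2 := min_le_left _ _
  set ε : ℝ := -c / w i with hε
  set y : EuclideanSpace ℝ (Fin d) := x i + ε • u with hy
  have hεw : ε * w i = -c := by rw [hε, div_mul_cancel₀ _ hwi]
  have hyX : y ∈ X := by
    apply interior_subset
    apply hball
    rw [Metric.mem_ball, hy, dist_eq_norm]
    simp only [add_sub_cancel_left]
    rw [norm_smul]
    have hne : ‖ε‖ = c / |w i| := by
      rw [hε, Real.norm_eq_abs, abs_div, abs_neg, abs_of_pos hc0]
    rw [hne]
    have hcle : c ≤ r * |w i| / (2 * ‖u‖) := min_le_right _ _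
    calc c / |w i| * ‖u‖ ≤ (r * |w i| / (2 * ‖u‖)) / |w i| * ‖u‖ := by gcongr
      _ = r / 2 := by field_simp
      _ < r := by linarith
  have hle := hNE.2 i y hyX
  have hsum := sum_update_smul w x i y
  have hupdate : loss w0 x0 w t i (Function.update x i y) = ‖(1 - c) • u‖ ^ 2 := by
    unfold loss
    rw [hsum]
    congr 2
    rw [hy, smul_add, smul_smul, mul_comm, hεw, hu]
    module
  have hloss : loss w0 x0 w t i x = ‖u‖ ^ 2 := rfl
  rw [hloss, hupdate, norm_smul, Real.norm_eq_abs,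
    abs_of_pos (by linarith : (0:ℝ) < 1 - c)] at hle
  have h2 : (1 - c) ^ 2 < 1 := by nlinarith [hc0, hc1]
  have h3 : ((1 - c) * ‖u‖) ^ 2 = (1 - c) ^ 2 * ‖u‖ ^ 2 := by ring
  nlinarith [mul_lt_mul_of_pos_right h2 (pow_pos hun 2), h3, hle]

/-- All-but-at-most-one extreme exaggeration: if the targets are pairwise
distinct and all influence weights are nonzero, then at every pure Nash
equilibrium at most one player's action lies in the interior of `𝒳`. -/
theorem pNE_at_most_one_interior {d n : ℕ} (X : Set (EuclideanSpace ℝ (Fin d)))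
    (w0 : ℝ) (x0 : EuclideanSpace ℝ (Fin d)) (w : Fin n → ℝ)
    (t : Fin n → EuclideanSpace ℝ (Fin d))
    (ht : ∀ i j : Fin n, i ≠ j → t i ≠ t j) (hw : ∀ i, w i ≠ 0)
    (x : Fin n → EuclideanSpace ℝ (Fin d)) (hNE : IsPureNE X w0 x0 w t x) :
    {i : Fin n | x i ∈ interior X}.Subsingleton := by
  intro i hi j hj
  by_contra hij
  exact ht i j hij ((key_interior X w0 x0 w t x hNE i (hw i) hi).symm.trans
    (key_interior X w0 x0 w t x hNE j (hw j) hj))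

end
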